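/- Let R be a strongly right C4*-ring admitting a right-to-left symmetry datum R = Σ × T, and let e = (e_Σ, e_T) be an idempotent of R with ReR = R. If the corner ring e_T T e_T has summand-square-free right regular module and satisfies the hereditary side-transfer condition HST and the corner-stability axiom CSA, then the full corner eRe is a strongly left C4*-ring. -/

import Mathlib

open MulOpposite

section C4Defs

/-- A submodule is a direct summand if it has a complement. -/
def IsDirectSummand {R M : Type*} [Ring R] [AddCommGroup M] [Module R M]
    (A : Submodule R M) : Prop :=
  ∃ B : Submodule R M, IsCompl A B

/-- `M` is a `C4`-module over `R`: for every internal direct sum decomposition `M = A ⊕ B`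
and every homomorphism `f : A → B` whose kernel is a direct summand of `A`, the image of `f`
is a direct summand of `B`. -/
def IsC4Module (R M : Type*) [Ring R] [AddCommGroup M] [Module R M] : Prop :=
  ∀ A B : Submodule R M, IsCompl A B → ∀ f : A →ₗ[R] B,
    IsDirectSummand (LinearMap.ker f) → IsDirectSummand (LinearMap.range f)

/-- `M` is a `C4*`-module: every submodule of `M` is a `C4`-module. -/
def IsC4StarModule (R M : Type*) [Ring R] [AddCommGroup M] [Module R M] : Prop :=
  ∀ N : Submodule R M, IsC4Module R N

/-- `M` is square-free: no nonzero submodules `A`, `B` with `A ⊓ B = ⊥` and `A ≅ B`. -/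
def IsSquareFreeModule (R M : Type*) [Ring R] [AddCommGroup M] [Module R M] : Prop :=
  ∀ A B : Submodule R M, A ≠ ⊥ → B ≠ ⊥ → A ⊓ B = ⊥ → IsEmpty (A ≃ₗ[R] B)

/-- `M` is summand-square-free: no nonzero direct summands `A`, `B` with `A ⊓ B = ⊥`
and `A ≅ B`. -/
def IsSummandSquareFree (R M : Type*) [Ring R] [AddCommGroup M] [Module R M] : Prop :=
  ∀ A B : Submodule R M, IsDirectSummand A → IsDirectSummand B →
    A ≠ ⊥ → B ≠ ⊥ → A ⊓ B = ⊥ → IsEmpty (A ≃ₗ[R] B)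

/-- `X` is an essential submodule of `A`. -/
def IsEssentialIn {R M : Type*} [Ring R] [AddCommGroup M] [Module R M]
    (X A : Submodule R M) : Prop :=
  X ≤ A ∧ ∀ N : Submodule R M, N ≤ A → N ≠ ⊥ → X ⊓ N ≠ ⊥

/-- A triple `(X, Y, f)` where `X`, `Y` are semisimple direct summands of `M` with
`X ⊓ Y = ⊥` and `f : X ≅ Y` an isomorphism.  These are the elements of the poset `S(M)`
from the definition of semi-weak-CS modules. -/
structure SWTriple (R M : Type*) [Ring R] [AddCommGroup M] [Module R M] where
  X : Submodule R M
  Y : Submodule R M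
  semisimpleX : IsSemisimpleModule R X
  semisimpleY : IsSemisimpleModule R Y
  summandX : IsDirectSummand X
  summandY : IsDirectSummand Y
  disj : X ⊓ Y = ⊥
  f : X ≃ₗ[R] Y

/-- The extension order on the poset `S(M)` of triples: `(X₁,Y₁,f₁) ≤ (X₂,Y₂,f₂)` iff
`X₁ ≤ X₂`, `Y₁ ≤ Y₂` and `f₂` restricts to `f₁` on `X₁`. -/
def SWTriple.Extends {R M : Type*} [Ring R] [AddCommGroup M] [Module R M]
    (t s : SWTriple R M) : Prop :=
  ∃ hX : t.X ≤ s.X, t.Y ≤ s.Y ∧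
    ∀ x : t.X, (s.f ⟨x.1, hX x.2⟩ : M) = (t.f x : M)

/-- `M` is semi-weak-CS: for every chain in the poset `S(M)`, with `X` the union of the first
components and `Y` the union of the second components, there are direct summands `A`, `B`
of `M` with `X` essential in `A` and `Y` essential in `B`. -/
def IsSemiWeakCS (R M : Type*) [Ring R] [AddCommGroup M] [Module R M] : Prop :=
  ∀ C : Set (SWTriple R M), IsChain SWTriple.Extends C →
    ∃ A B : Submodule R M, IsDirectSummand A ∧ IsDirectSummand B ∧
      IsEssentialIn (⨆ t ∈ C, t.X) A ∧ IsEssentialIn (⨆ t ∈ C, t.Y) B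

/-- `M` is strongly `C4*` if it is both semi-weak-CS and `C4*`. -/
def IsStronglyC4StarModule (R M : Type*) [Ring R] [AddCommGroup M] [Module R M] : Prop :=
  IsSemiWeakCS R M ∧ IsC4StarModule R M

/-- `R` is a right `C4*`-ring: the right regular module `R_R` (i.e. `R` as a module over
`Rᵐᵒᵖ`) is a `C4*`-module. -/
def IsRightC4StarRing (R : Type*) [Ring R] : Prop := IsC4StarModule Rᵐᵒᵖ R

/-- `R` is a left `C4*`-ring: the left regular module `_RR` is a `C4*`-module. -/
def IsLeftC4StarRing (R : Type*) [Ring R] : Prop := IsC4StarModule R R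

/-- `R` is a strongly right `C4*`-ring. -/
def IsStronglyRightC4StarRing (R : Type*) [Ring R] : Prop := IsStronglyC4StarModule Rᵐᵒᵖ R

/-- `R` is a strongly left `C4*`-ring. -/
def IsStronglyLeftC4StarRing (R : Type*) [Ring R] : Prop := IsStronglyC4StarModule R R

/-- `R` is right semi-weak-CS. -/
def IsRightSemiWeakCSRing (R : Type*) [Ring R] : Prop := IsSemiWeakCS Rᵐᵒᵖ R

/-- `R` is left semi-weak-CS. -/
def IsLeftSemiWeakCSRing (R : Type*) [Ring R] : Prop := IsSemiWeakCS R R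

/-- The left square-free transfer condition `LSF`: if the right regular module `T_T` is
summand-square-free then the left regular module `_TT` is square-free. -/
def LSF (T : Type*) [Ring T] : Prop :=
  IsSummandSquareFree Tᵐᵒᵖ T → IsSquareFreeModule T T

end C4Defs

section Corner

variable {T : Type*} [Ring T]

/-- The corner `eTe = {x : T | e * x = x ∧ x * e = x}` as a non-unital subring. -/
def cornerSubring (e : T) : NonUnitalSubring T where
  carrier := {x : T | e * x = x ∧ x * e = x}
  add_mem' := by
    rintro a b ⟨ha1, ha2⟩ ⟨hb1, hb2⟩
    exact ⟨by rw [mul_add, ha1, hb1], by rw [add_mul, ha2, hb2]⟩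
  zero_mem' := ⟨mul_zero e, zero_mul e⟩
  neg_mem' := by
    rintro a ⟨ha1, ha2⟩
    exact ⟨by rw [mul_neg, ha1], by rw [neg_mul, ha2]⟩
  mul_mem' := by
    rintro a b ⟨ha1, ha2⟩ ⟨hb1, hb2⟩
    exact ⟨by rw [← mul_assoc, ha1], by rw [mul_assoc, hb2]⟩

theorem mem_cornerSubring {e x : T} :
    x ∈ cornerSubring e ↔ e * x = x ∧ x * e = x := Iff.rfl

/-- The corner ring `eTe` associated to an idempotent `e` of `T`; its identity is `e`. -/
def Corner (e : T) (he : IsIdempotentElem e) : Type _ := ↥(cornerSubring e)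

instance {e : T} {he : IsIdempotentElem e} : Ring (Corner e he) :=
  { (inferInstance : NonUnitalRing ↥(cornerSubring e)) with
    one := ⟨e, he, he⟩
    one_mul := fun x => Subtype.ext (mem_cornerSubring.mp x.2).1
    mul_one := fun x => Subtype.ext (mem_cornerSubring.mp x.2).2 }

/-- `eT = {x : T | e * x = x}` as an additive subgroup; it is a left module over the
corner ring `eTe`. -/
def leftPart (e : T) : AddSubgroup T where
  carrier := {x : T | e * x = x}
  add_mem' := by
    intro a b ha hb
    simp only [Set.mem_setOf_eq] at *
    rw [mul_add, ha, hb]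
  zero_mem' := mul_zero e
  neg_mem' := by
    intro a ha
    simp only [Set.mem_setOf_eq] at *
    rw [mul_neg, ha]

/-- `Te = {x : T | x * e = x}` as an additive subgroup; it is a right module over the
corner ring `eTe`. -/
def rightPart (e : T) : AddSubgroup T where
  carrier := {x : T | x * e = x}
  add_mem' := by
    intro a b ha hb
    simp only [Set.mem_setOf_eq] at *
    rw [add_mul, ha, hb]
  zero_mem' := zero_mul e
  neg_mem' := by
    intro a ha
    simp only [Set.mem_setOf_eq] at *
    rw [neg_mul, ha]

theorem mem_leftPart {e x : T} : x ∈ leftPart e ↔ e * x = x := Iff.rfl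

theorem mem_rightPart {e x : T} : x ∈ rightPart e ↔ x * e = x := Iff.rfl

/-- `eT` is a (unital) left module over the corner ring `eTe`. -/
instance {e : T} {he : IsIdempotentElem e} : Module (Corner e he) ↥(leftPart e) where
  smul c x := ⟨c.1 * x.1, by
    have h1 : e * c.1 = c.1 := (mem_cornerSubring.mp c.2).1
    show e * (c.1 * x.1) = c.1 * x.1
    rw [← mul_assoc, h1]⟩
  one_smul x := Subtype.ext (by
    change e * x.1 = x.1
    exact mem_leftPart.mp x.2)
  mul_smul a b x := Subtype.ext (by
    change (a.1 * b.1) * x.1 = a.1 * (b.1 * x.1)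
    rw [mul_assoc])
  smul_zero a := Subtype.ext (by
    show a.1 * 0 = 0
    exact mul_zero _)
  smul_add a x y := Subtype.ext (by
    show a.1 * (x.1 + y.1) = a.1 * x.1 + a.1 * y.1
    exact mul_add _ _ _)
  add_smul a b x := Subtype.ext (by
    change (a.1 + b.1) * x.1 = a.1 * x.1 + b.1 * x.1
    exact add_mul _ _ _)
  zero_smul x := Subtype.ext (by
    change (0 : T) * x.1 = 0
    exact zero_mul _)

/-- `Te` is a (unital) right module over the corner ring `eTe`, i.e. a module over
`(eTe)ᵐᵒᵖ`. -/
instance {e : T} {he : IsIdempotentElem e} : Module (Corner e he)ᵐᵒᵖ ↥(rightPart e) where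
  smul c x := ⟨x.1 * (unop c).1, by
    have h2 : (unop c).1 * e = (unop c).1 := (mem_cornerSubring.mp (unop c).2).2
    show (x.1 * (unop c).1) * e = x.1 * (unop c).1
    rw [mul_assoc, h2]⟩
  one_smul x := Subtype.ext (by
    change x.1 * e = x.1
    exact mem_rightPart.mp x.2)
  mul_smul a b x := Subtype.ext (by
    change x.1 * ((unop b).1 * (unop a).1) = (x.1 * (unop b).1) * (unop a).1
    rw [mul_assoc])
  smul_zero a := Subtype.ext (by
    show (0 : T) * (unop a).1 = 0
    exact zero_mul _)
  smul_add a x y := Subtype.ext (by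
    show (x.1 + y.1) * (unop a).1 = x.1 * (unop a).1 + y.1 * (unop a).1
    exact add_mul _ _ _)
  add_smul a b x := Subtype.ext (by
    change x.1 * ((unop a).1 + (unop b).1) = x.1 * (unop a).1 + x.1 * (unop b).1
    exact mul_add _ _ _)
  zero_smul x := Subtype.ext (by
    change x.1 * (0 : T) = 0
    exact mul_zero _)

/-- The hereditary side-transfer condition `HST`: for every idempotent `e` of `T`, if the
module `eT`/`Te` is summand-square-free as a right `eTe`-module (formalized on the carrier
`Te = rightPart e`, which carries the unital right `eTe`-action; at `e = 1` this is the right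
regular module `T_T`), then the left `eTe`-module (carrier `eT = leftPart e`, carrying the
unital left `eTe`-action; at `e = 1` this is the left regular module `_TT`) is square-free. -/
def HST (T : Type*) [Ring T] : Prop :=
  ∀ (e : T) (he : IsIdempotentElem e),
    IsSummandSquareFree (Corner e he)ᵐᵒᵖ ↥(rightPart e) →
      IsSquareFreeModule (Corner e he) ↥(leftPart e)

/-- The corner-stability axiom `CSA`: for every idempotent `e` of `T`, the left regular
module of the corner ring `eTe` is semi-weak-CS. -/
def CSAxiom (T : Type*) [Ring T] : Prop :=
  ∀ (e : T) (he : IsIdempotentElem e),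
    IsSemiWeakCS (Corner e he) (Corner e he)

end Corner

section SymmetryDatum

/-- A right-to-left symmetry datum on `R`: a ring decomposition `R ≅ S × T` where `S` is
semisimple artinian, the right regular module `T_T` is summand-square-free, the two ideals
`S`, `T` are orthogonal as right `R`-modules (no nonzero isomorphic right `R`-submodules),
and `T` satisfies `HST` and `CSA`. -/
structure RightToLeftSymmetryDatum (R S T : Type*) [Ring R] [Ring S] [Ring T] where
  iso : R ≃+* S × T
  semisimpleArtinian : IsSemisimpleRing S
  ssf : IsSummandSquareFree Tᵐᵒᵖ T
  orthogonal : ∀ A B : Submodule Rᵐᵒᵖ R,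
    (∀ a ∈ A, (iso a).2 = 0) → (∀ b ∈ B, (iso b).1 = 0) →
    A ≠ ⊥ → B ≠ ⊥ → IsEmpty (A ≃ₗ[Rᵐᵒᵖ] B)
  hst : HST T
  csa : CSAxiom T

end SymmetryDatum

section Beta

variable (R : Type*) [Ring R]

/-- The right annihilator `r_R(P) = {s : R | P s = 0}` of a right submodule `P` of `R`. -/
def rightAnnSet (P : Submodule Rᵐᵒᵖ R) : Set R := {s : R | ∀ p ∈ P, p * s = 0}

/-- The annihilator-bidual `β_r(P) = ℓ_R(r_R(P))`, as a right ideal of `R`. -/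
def betaR (P : Submodule Rᵐᵒᵖ R) : Submodule Rᵐᵒᵖ R where
  carrier := {r : R | ∀ s ∈ rightAnnSet R P, r * s = 0}
  add_mem' := by
    intro a b ha hb
    intro s hs
    rw [add_mul, ha s hs, hb s hs, add_zero]
  zero_mem' := by
    intro s hs
    exact zero_mul s
  smul_mem' := by
    intro c x hx s hs
    show (x * unop c) * s = 0
    rw [mul_assoc]
    refine hx _ ?_
    intro p hp
    rw [← mul_assoc]
    exact hs (p * unop c) (Submodule.smul_mem P c hp)

/-- A right ideal is a two-sided ideal which is a ring direct summand of `R` iff it is of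
the form `cR` for a central idempotent `c`. -/
def IsRingDirectSummandIdeal {R : Type*} [Ring R] (I : Submodule Rᵐᵒᵖ R) : Prop :=
  ∃ c : R, IsIdempotentElem c ∧ (∀ r : R, c * r = r * c) ∧ (∀ x : R, x ∈ I ↔ c * x = x)

/-- `R` has right semisimple annihilator asymmetry. -/
def HasRightSemisimpleAnnihilatorAsymmetry (R : Type*) [Ring R] : Prop :=
  ∃ P : Submodule Rᵐᵒᵖ R, IsSemisimpleModule Rᵐᵒᵖ P ∧ IsDirectSummand P ∧
    (¬ IsSemisimpleModule Rᵐᵒᵖ (betaR R P) ∨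
     (IsSemisimpleModule Rᵐᵒᵖ (betaR R P) ∧ ¬ IsRingDirectSummandIdeal (betaR R P)) ∨
     ¬ IsEssentialIn P (betaR R P))

end Beta

namespace C4Aux

/-! ### Central idempotent decomposition of a module -/

section CentralIdem

variable {R : Type*} [Ring R] {c : R}
variable {M : Type*} [AddCommGroup M] [Module R M]

/-- The `c`-fixed part `{x | c • x = x}` of a module, for `c` central. -/
def cFix (c : R) (hcen : ∀ r : R, c * r = r * c) (M : Type*) [AddCommGroup M] [Module R M] :
    Submodule R M where
  carrier := {x | c • x = x}
  add_mem' := by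
    intro a b ha hb
    simp only [Set.mem_setOf_eq] at *
    rw [smul_add, ha, hb]
  zero_mem' := smul_zero c
  smul_mem' := by
    intro a x hx
    simp only [Set.mem_setOf_eq] at *
    rw [smul_smul, hcen a, ← smul_smul, hx]

/-- The `c`-killed part `{x | c • x = 0}` of a module, for `c` central. -/
def cKill (c : R) (hcen : ∀ r : R, c * r = r * c) (M : Type*) [AddCommGroup M] [Module R M] :
    Submodule R M where
  carrier := {x | c • x = 0}
  add_mem' := by
    intro a b ha hb
    simp only [Set.mem_setOf_eq] at *
    rw [smul_add, ha, hb, add_zero]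
  zero_mem' := smul_zero c
  smul_mem' := by
    intro a x hx
    simp only [Set.mem_setOf_eq] at *
    rw [smul_smul, hcen a, ← smul_smul, hx, smul_zero]

variable (hcen : ∀ r : R, c * r = r * c)

theorem mem_cFix {x : M} : x ∈ cFix c hcen M ↔ c • x = x := Iff.rfl

theorem mem_cKill {x : M} : x ∈ cKill c hcen M ↔ c • x = 0 := Iff.rfl

theorem isCompl_cFix_cKill (hc : IsIdempotentElem c) : IsCompl (cFix c hcen M) (cKill c hcen M) := by
  constructor
  · rw [disjoint_iff, eq_bot_iff]
    intro x hx
    obtain ⟨h1, h2⟩ := Submodule.mem_inf.mp hx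
    have : x = 0 := by rw [← h1]; exact h2
    simp [this]
  · rw [codisjoint_iff, eq_top_iff]
    intro x _
    have h1 : c • x ∈ cFix c hcen M := show c • c • x = c • x by rw [smul_smul, hc]
    have h2 : x - c • x ∈ cKill c hcen M := show c • (x - c • x) = 0 by
      rw [smul_sub, smul_smul, hc, sub_self]
    exact Submodule.mem_sup.mpr ⟨c • x, h1, x - c • x, h2, by abel⟩

theorem le_cFix_of_inf_cKill_eq_bot (hc : IsIdempotentElem c) {P : Submodule R M}
    (h : P ⊓ cKill c hcen M = ⊥) : P ≤ cFix c hcen M := by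
  intro x hx
  have h1 : x - c • x ∈ P := P.sub_mem hx (P.smul_mem c hx)
  have h2 : x - c • x ∈ cKill c hcen M := show c • (x - c • x) = 0 by
    rw [smul_sub, smul_smul, hc, sub_self]
  have h3 : x - c • x ∈ P ⊓ cKill c hcen M := Submodule.mem_inf.mpr ⟨h1, h2⟩
  rw [h] at h3
  have h4 : x - c • x = 0 := by simpa using h3
  show c • x = x
  have := sub_eq_zero.mp h4
  exact this.symm

theorem isCompl_of_cFix_pieces (hc : IsIdempotentElem c) {P W : Submodule R M}
    (hP : P ≤ cFix c hcen M) (hW : W ≤ cFix c hcen M)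
    (hd : P ⊓ W = ⊥) (hs : P ⊔ W = cFix c hcen M) :
    IsCompl P (W ⊔ cKill c hcen M) := by
  constructor
  · rw [disjoint_iff, eq_bot_iff]
    intro x hx
    obtain ⟨hxP, hxWK⟩ := Submodule.mem_inf.mp hx
    obtain ⟨w, hw, k, hk, rfl⟩ := Submodule.mem_sup.mp hxWK
    have h1 : c • (w + k) = w + k := hP hxP
    have h2 : c • w = w := hW hw
    have h3 : c • k = (0 : M) := hk
    have hkey : w + k = w := by rw [← h1, smul_add, h2, h3, add_zero]
    have hmem : w + k ∈ P ⊓ W := Submodule.mem_inf.mpr ⟨hxP, by rw [hkey]; exact hw⟩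
    rw [hd] at hmem
    exact hmem
  · rw [codisjoint_iff, ← sup_assoc, hs]
    exact codisjoint_iff.mp (isCompl_cFix_cKill hcen hc).codisjoint

theorem isDirectSummand_of_le_cFix (hc : IsIdempotentElem c)
    (hss : IsSemisimpleModule R ↥(cFix c hcen M)) {P : Submodule R M}
    (hP : P ≤ cFix c hcen M) : IsDirectSummand P := by
  haveI := hss
  obtain ⟨W₀, hW₀⟩ := exists_isCompl (Submodule.comap (cFix c hcen M).subtype P)
  have hPm : Submodule.map (cFix c hcen M).subtype
      (Submodule.comap (cFix c hcen M).subtype P) = P := by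
    rw [Submodule.map_comap_subtype, inf_eq_right.mpr hP]
  refine ⟨Submodule.map (cFix c hcen M).subtype W₀ ⊔ cKill c hcen M,
    isCompl_of_cFix_pieces hcen hc hP (Submodule.map_subtype_le _ _) ?_ ?_⟩
  · rw [← hPm, ← Submodule.map_inf _ (Submodule.injective_subtype _),
      disjoint_iff.mp hW₀.disjoint, Submodule.map_bot]
  · rw [← hPm, ← Submodule.map_sup, codisjoint_iff.mp hW₀.codisjoint,
      Submodule.map_subtype_top]

theorem cFix_semisimple_of_injective {M' : Type*} [AddCommGroup M'] [Module R M']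
    (j : M →ₗ[R] M') (hj : Function.Injective j)
    (hss : IsSemisimpleModule R ↥(cFix c hcen M')) :
    IsSemisimpleModule R ↥(cFix c hcen M) := by
  have hle : Submodule.map j (cFix c hcen M) ≤ cFix c hcen M' := by
    rintro _ ⟨x, hx, rfl⟩
    show c • j x = j x
    rw [← map_smul, hx]
  haveI := hss
  exact IsSemisimpleModule.congr
    ((Submodule.equivMapOfInjective j hj _).trans (Submodule.comapSubtypeEquivOfLe hle).symm)

/-- Restrict a linear equivalence between submodules to smaller submodules. -/
def restrictEquiv {U V : Submodule R M} (f : ↥U ≃ₗ[R] ↥V) {P Q : Submodule R M}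
    (hPU : P ≤ U) (hQV : Q ≤ V)
    (h1 : ∀ x (hx : x ∈ P), ((f ⟨x, hPU hx⟩ : ↥V) : M) ∈ Q)
    (h2 : ∀ y (hy : y ∈ Q), ((f.symm ⟨y, hQV hy⟩ : ↥U) : M) ∈ P) :
    ↥P ≃ₗ[R] ↥Q where
  toFun x := ⟨((f ⟨x.1, hPU x.2⟩ : ↥V) : M), h1 x.1 x.2⟩
  invFun y := ⟨((f.symm ⟨y.1, hQV y.2⟩ : ↥U) : M), h2 y.1 y.2⟩
  left_inv x := by
    apply Subtype.ext
    show ((f.symm ⟨((f ⟨x.1, hPU x.2⟩ : ↥V) : M), _⟩ : ↥U) : M) = x.1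
    rw [show (⟨((f ⟨x.1, hPU x.2⟩ : ↥V) : M), hQV (h1 x.1 x.2)⟩ : ↥V)
        = f ⟨x.1, hPU x.2⟩ from Subtype.ext rfl]
    rw [f.symm_apply_apply]
  right_inv y := by
    apply Subtype.ext
    show ((f ⟨((f.symm ⟨y.1, hQV y.2⟩ : ↥U) : M), _⟩ : ↥V) : M) = y.1
    rw [show (⟨((f.symm ⟨y.1, hQV y.2⟩ : ↥U) : M), hPU (h2 y.1 y.2)⟩ : ↥U)
        = f.symm ⟨y.1, hQV y.2⟩ from Subtype.ext rfl]
    rw [f.apply_symm_apply]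
  map_add' x y := by
    apply Subtype.ext
    show ((f ⟨(x + y : ↥P).1, _⟩ : ↥V) : M) = _
    rw [show (⟨(x + y : ↥P).1, hPU (x + y).2⟩ : ↥U)
        = ⟨x.1, hPU x.2⟩ + ⟨y.1, hPU y.2⟩ from Subtype.ext rfl]
    rw [map_add]
    rfl
  map_smul' r x := by
    apply Subtype.ext
    show ((f ⟨(r • x : ↥P).1, _⟩ : ↥V) : M) = _
    rw [show (⟨(r • x : ↥P).1, hPU (r • x).2⟩ : ↥U)
        = r • ⟨x.1, hPU x.2⟩ from Subtype.ext rfl]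
    rw [map_smul]
    rfl

end CentralIdem

end C4Aux
namespace C4Aux

section MainLemmas

variable {R : Type*} [Ring R] {c : R}
variable {M : Type*} [AddCommGroup M] [Module R M]
variable (hcen : ∀ r : R, c * r = r * c)

theorem c4star_of_central_split (hc : IsIdempotentElem c)
    (hss : IsSemisimpleModule R ↥(cFix c hcen M))
    (hsf : ∀ P Q : Submodule R M, P ≤ cKill c hcen M → Q ≤ cKill c hcen M →
      P ≠ ⊥ → Q ≠ ⊥ → P ⊓ Q = ⊥ → IsEmpty (↥P ≃ₗ[R] ↥Q)) :
    IsC4StarModule R M := by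
  intro N A B hAB f hker
  obtain ⟨K, hK⟩ := hker
  set ιA : ↥A →ₗ[R] M := N.subtype.comp A.subtype with hιA_def
  set ιB : ↥B →ₗ[R] M := N.subtype.comp B.subtype with hιB_def
  have hιA : Function.Injective ιA := N.injective_subtype.comp A.injective_subtype
  have hιB : Function.Injective ιB := N.injective_subtype.comp B.injective_subtype
  set KK : Submodule R M := Submodule.map ιA K with hKK_def
  set RR : Submodule R M := Submodule.map ιB (LinearMap.range f) with hRR_def
  have φ : ↥K ≃ₗ[R] ↥(LinearMap.range f) :=
    (Submodule.quotientEquivOfIsCompl _ _ hK).symm.trans f.quotKerEquivRange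
  have Ψ : ↥KK ≃ₗ[R] ↥RR :=
    ((Submodule.equivMapOfInjective ιA hιA K).symm.trans φ).trans
      (Submodule.equivMapOfInjective ιB hιB _)
  set P := KK ⊓ cKill c hcen M with hP_def
  set Q := RR ⊓ cKill c hcen M with hQ_def
  have h1 : ∀ x (hx : x ∈ P), ((Ψ ⟨x, (Submodule.mem_inf.mp hx).1⟩ : ↥RR) : M) ∈ Q := by
    intro x hx
    refine Submodule.mem_inf.mpr ⟨(Ψ ⟨x, (Submodule.mem_inf.mp hx).1⟩).2, ?_⟩
    show c • ((Ψ ⟨x, (Submodule.mem_inf.mp hx).1⟩ : ↥RR) : M) = 0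
    have hx0 : c • (⟨x, (Submodule.mem_inf.mp hx).1⟩ : ↥KK) = 0 :=
      Subtype.ext (show c • x = (0 : M) from (Submodule.mem_inf.mp hx).2)
    have : c • Ψ ⟨x, (Submodule.mem_inf.mp hx).1⟩ = 0 := by rw [← map_smul, hx0, map_zero]
    rw [← Submodule.coe_smul, this, Submodule.coe_zero]
  have h2 : ∀ y (hy : y ∈ Q), ((Ψ.symm ⟨y, (Submodule.mem_inf.mp hy).1⟩ : ↥KK) : M) ∈ P := by
    intro y hy
    refine Submodule.mem_inf.mpr ⟨(Ψ.symm ⟨y, (Submodule.mem_inf.mp hy).1⟩).2, ?_⟩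
    show c • ((Ψ.symm ⟨y, (Submodule.mem_inf.mp hy).1⟩ : ↥KK) : M) = 0
    have hy0 : c • (⟨y, (Submodule.mem_inf.mp hy).1⟩ : ↥RR) = 0 :=
      Subtype.ext (show c • y = (0 : M) from (Submodule.mem_inf.mp hy).2)
    have : c • Ψ.symm ⟨y, (Submodule.mem_inf.mp hy).1⟩ = 0 := by rw [← map_smul, hy0, map_zero]
    rw [← Submodule.coe_smul, this, Submodule.coe_zero]
  have e0 : ↥P ≃ₗ[R] ↥Q := restrictEquiv Ψ inf_le_left inf_le_left h1 h2
  have hQbot : Q = ⊥ := by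
    by_contra hQ0
    obtain ⟨y, hy, hy0⟩ := (Submodule.ne_bot_iff Q).mp hQ0
    have hP0 : P ≠ ⊥ := by
      refine (Submodule.ne_bot_iff P).mpr
        ⟨(e0.symm ⟨y, hy⟩ : M), (e0.symm ⟨y, hy⟩).2, ?_⟩
      intro h0
      have h00 : e0.symm ⟨y, hy⟩ = 0 := Subtype.ext h0
      have := congrArg e0 h00
      rw [e0.apply_symm_apply, map_zero] at this
      exact hy0 (congrArg Subtype.val this)
    have hKA : KK ≤ Submodule.map N.subtype A := by
      rw [hKK_def, hιA_def, Submodule.map_comp]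
      exact Submodule.map_mono (Submodule.map_subtype_le _ _)
    have hRB : RR ≤ Submodule.map N.subtype B := by
      rw [hRR_def, hιB_def, Submodule.map_comp]
      exact Submodule.map_mono (Submodule.map_subtype_le _ _)
    have hdisj : P ⊓ Q = ⊥ := by
      rw [eq_bot_iff]
      intro x hx
      obtain ⟨hx1, hx2⟩ := Submodule.mem_inf.mp hx
      have hm : x ∈ Submodule.map N.subtype A ⊓ Submodule.map N.subtype B :=
        Submodule.mem_inf.mpr ⟨hKA (Submodule.mem_inf.mp hx1).1, hRB (Submodule.mem_inf.mp hx2).1⟩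
      rw [← Submodule.map_inf _ N.injective_subtype, disjoint_iff.mp hAB.disjoint,
        Submodule.map_bot] at hm
      exact hm
    exact (hsf P Q inf_le_right inf_le_right hP0 hQ0 hdisj).false e0
  have hRfix : RR ≤ cFix c hcen M := le_cFix_of_inf_cKill_eq_bot hcen hc hQbot
  have hrange : LinearMap.range f ≤ cFix c hcen ↥B := by
    intro y hy
    have hmem : ιB y ∈ RR := Submodule.mem_map_of_mem hy
    have hfix := hRfix hmem
    show c • y = y
    apply hιB
    rw [map_smul]
    exact hfix
  exact isDirectSummand_of_le_cFix hcen hc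
    (cFix_semisimple_of_injective hcen ιB hιB hss) hrange

theorem triple_cKill_eq_bot
    (hsf : ∀ P Q : Submodule R M, P ≤ cKill c hcen M → Q ≤ cKill c hcen M →
      P ≠ ⊥ → Q ≠ ⊥ → P ⊓ Q = ⊥ → IsEmpty (↥P ≃ₗ[R] ↥Q))
    (t : SWTriple R M) :
    t.X ⊓ cKill c hcen M = ⊥ ∧ t.Y ⊓ cKill c hcen M = ⊥ := by
  set P := t.X ⊓ cKill c hcen M with hP_def
  set Q := t.Y ⊓ cKill c hcen M with hQ_def
  have h1 : ∀ x (hx : x ∈ P), ((t.f ⟨x, (Submodule.mem_inf.mp hx).1⟩ : ↥t.Y) : M) ∈ Q := by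
    intro x hx
    refine Submodule.mem_inf.mpr ⟨(t.f ⟨x, (Submodule.mem_inf.mp hx).1⟩).2, ?_⟩
    show c • ((t.f ⟨x, (Submodule.mem_inf.mp hx).1⟩ : ↥t.Y) : M) = 0
    have hx0 : c • (⟨x, (Submodule.mem_inf.mp hx).1⟩ : ↥t.X) = 0 :=
      Subtype.ext (show c • x = (0 : M) from (Submodule.mem_inf.mp hx).2)
    have : c • t.f ⟨x, (Submodule.mem_inf.mp hx).1⟩ = 0 := by rw [← map_smul, hx0, map_zero]
    rw [← Submodule.coe_smul, this, Submodule.coe_zero]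
  have h2 : ∀ y (hy : y ∈ Q), ((t.f.symm ⟨y, (Submodule.mem_inf.mp hy).1⟩ : ↥t.X) : M) ∈ P := by
    intro y hy
    refine Submodule.mem_inf.mpr ⟨(t.f.symm ⟨y, (Submodule.mem_inf.mp hy).1⟩).2, ?_⟩
    show c • ((t.f.symm ⟨y, (Submodule.mem_inf.mp hy).1⟩ : ↥t.X) : M) = 0
    have hy0 : c • (⟨y, (Submodule.mem_inf.mp hy).1⟩ : ↥t.Y) = 0 :=
      Subtype.ext (show c • y = (0 : M) from (Submodule.mem_inf.mp hy).2)
    have : c • t.f.symm ⟨y, (Submodule.mem_inf.mp hy).1⟩ = 0 := by rw [← map_smul, hy0, map_zero]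
    rw [← Submodule.coe_smul, this, Submodule.coe_zero]
  have e0 : ↥P ≃ₗ[R] ↥Q := restrictEquiv t.f inf_le_left inf_le_left h1 h2
  have hP : P = ⊥ := by
    by_contra hP0
    obtain ⟨x, hx, hx0⟩ := (Submodule.ne_bot_iff P).mp hP0
    have hQ0 : Q ≠ ⊥ := by
      refine (Submodule.ne_bot_iff Q).mpr ⟨(e0 ⟨x, hx⟩ : M), (e0 ⟨x, hx⟩).2, ?_⟩
      intro h0
      have h00 : e0 ⟨x, hx⟩ = 0 := Subtype.ext h0
      have := congrArg e0.symm h00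
      rw [e0.symm_apply_apply, map_zero] at this
      exact hx0 (congrArg Subtype.val this)
    have hdisj : P ⊓ Q = ⊥ := by
      rw [eq_bot_iff]
      intro z hz
      obtain ⟨hz1, hz2⟩ := Submodule.mem_inf.mp hz
      have : z ∈ t.X ⊓ t.Y :=
        Submodule.mem_inf.mpr ⟨(Submodule.mem_inf.mp hz1).1, (Submodule.mem_inf.mp hz2).1⟩
      rw [t.disj] at this
      exact this
    exact (hsf P Q inf_le_right inf_le_right hP0 hQ0 hdisj).false e0
  have hQ : Q = ⊥ := by
    rw [eq_bot_iff]
    intro y hy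
    have hmem : (e0.symm ⟨y, hy⟩ : M) ∈ P := (e0.symm ⟨y, hy⟩).2
    have hmem' : (e0.symm ⟨y, hy⟩ : M) ∈ (⊥ : Submodule R M) := hP.le hmem
    have h3 : e0.symm ⟨y, hy⟩ = 0 := Subtype.ext (by simpa using hmem')
    have := congrArg e0 h3
    rw [e0.apply_symm_apply, map_zero] at this
    have : y = 0 := congrArg Subtype.val this
    simp [this]
  exact ⟨hP, hQ⟩

theorem semiWeakCS_of_central_split (hc : IsIdempotentElem c)
    (hss : IsSemisimpleModule R ↥(cFix c hcen M))
    (hsf : ∀ P Q : Submodule R M, P ≤ cKill c hcen M → Q ≤ cKill c hcen M →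
      P ≠ ⊥ → Q ≠ ⊥ → P ⊓ Q = ⊥ → IsEmpty (↥P ≃ₗ[R] ↥Q)) :
    IsSemiWeakCS R M := by
  intro Ch hCh
  have hXfix : (⨆ t ∈ Ch, t.X) ≤ cFix c hcen M := by
    apply le_cFix_of_inf_cKill_eq_bot hcen hc
    rw [eq_bot_iff]
    intro x hx
    obtain ⟨hx1, hx2⟩ := Submodule.mem_inf.mp hx
    show x ∈ (⊥ : Submodule R M)
    by_contra hx0
    have hx0' : x ≠ 0 := by simpa using hx0
    rcases isEmpty_or_nonempty ↥Ch with hemp | hne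
    · have hbot : (⨆ t ∈ Ch, SWTriple.X t) = (⊥ : Submodule R M) := by
        rw [iSup_subtype']
        exact iSup_of_empty _
      rw [hbot] at hx1
      exact hx0' (by simpa using hx1)
    · have hdir : Directed (· ≤ ·) (fun t : ↥Ch => t.1.X) := by
        intro a b
        rcases eq_or_ne a.1 b.1 with hab | hab
        · exact ⟨b, le_of_eq (congrArg SWTriple.X hab), le_refl _⟩
        · rcases hCh a.2 b.2 hab with hext | hext
          · obtain ⟨hXle, _, _⟩ := hext
            exact ⟨b, hXle, le_refl _⟩
          · obtain ⟨hXle, _, _⟩ := hext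
            exact ⟨a, le_refl _, hXle⟩
      have hx1' : x ∈ ⨆ t : ↥Ch, t.1.X := by
        rw [iSup_subtype'] at hx1
        exact hx1
      obtain ⟨t, hxt⟩ := (Submodule.mem_iSup_of_directed _ hdir).mp hx1'
      have hb := (triple_cKill_eq_bot hcen hsf t.1).1
      have hmem : x ∈ t.1.X ⊓ cKill c hcen M := Submodule.mem_inf.mpr ⟨hxt, hx2⟩
      rw [hb] at hmem
      exact hx0' (by simpa using hmem)
  have hYfix : (⨆ t ∈ Ch, t.Y) ≤ cFix c hcen M := by
    apply le_cFix_of_inf_cKill_eq_bot hcen hc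
    rw [eq_bot_iff]
    intro x hx
    obtain ⟨hx1, hx2⟩ := Submodule.mem_inf.mp hx
    show x ∈ (⊥ : Submodule R M)
    by_contra hx0
    have hx0' : x ≠ 0 := by simpa using hx0
    rcases isEmpty_or_nonempty ↥Ch with hemp | hne
    · have hbot : (⨆ t ∈ Ch, SWTriple.Y t) = (⊥ : Submodule R M) := by
        rw [iSup_subtype']
        exact iSup_of_empty _
      rw [hbot] at hx1
      exact hx0' (by simpa using hx1)
    · have hdir : Directed (· ≤ ·) (fun t : ↥Ch => t.1.Y) := by
        intro a b
        rcases eq_or_ne a.1 b.1 with hab | hab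
        · exact ⟨b, le_of_eq (congrArg SWTriple.Y hab), le_refl _⟩
        · rcases hCh a.2 b.2 hab with hext | hext
          · obtain ⟨_, hYle, _⟩ := hext
            exact ⟨b, hYle, le_refl _⟩
          · obtain ⟨_, hYle, _⟩ := hext
            exact ⟨a, le_refl _, hYle⟩
      have hx1' : x ∈ ⨆ t : ↥Ch, t.1.Y := by
        rw [iSup_subtype'] at hx1
        exact hx1
      obtain ⟨t, hxt⟩ := (Submodule.mem_iSup_of_directed _ hdir).mp hx1'
      have hb := (triple_cKill_eq_bot hcen hsf t.1).2
      have hmem : x ∈ t.1.Y ⊓ cKill c hcen M := Submodule.mem_inf.mpr ⟨hxt, hx2⟩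
      rw [hb] at hmem
      exact hx0' (by simpa using hmem)
  refine ⟨_, _, isDirectSummand_of_le_cFix hcen hc hss hXfix,
    isDirectSummand_of_le_cFix hcen hc hss hYfix, ?_, ?_⟩
  · exact ⟨le_refl _, fun N hle hne => by rw [inf_eq_right.mpr hle]; exact hne⟩
  · exact ⟨le_refl _, fun N hle hne => by rw [inf_eq_right.mpr hle]; exact hne⟩

end MainLemmas

end C4Aux
namespace C4Aux

/-! ### Transport of module-theoretic properties along a compatible pair -/

section Transport

variable {C D : Type*} [Ring C] [Ring D]
variable {M N : Type*} [AddCommGroup M] [Module C M] [AddCommGroup N] [Module D N]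
variable (ρ : C →+* D) (g : M ≃+ N)

theorem tg_symm (hg : ∀ (a : C) (x : M), g (a • x) = ρ a • g x) (a : C) (n : N) :
    g.symm (ρ a • n) = a • g.symm n := by
  apply g.injective
  rw [g.apply_symm_apply, hg, g.apply_symm_apply]

variable (hρ : Function.Surjective ρ) (hg : ∀ (a : C) (x : M), g (a • x) = ρ a • g x)

/-- Transport a submodule along the compatible pair. -/
def tSub (P : Submodule C M) : Submodule D N where
  carrier := {n | g.symm n ∈ P}
  add_mem' := by
    intro a b ha hb
    simp only [Set.mem_setOf_eq, map_add] at *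
    exact P.add_mem ha hb
  zero_mem' := by
    simp only [Set.mem_setOf_eq, map_zero]
    exact P.zero_mem
  smul_mem' := by
    intro dd x hx
    obtain ⟨a, rfl⟩ := hρ dd
    simp only [Set.mem_setOf_eq] at *
    rw [tg_symm ρ g hg]
    exact P.smul_mem a hx

theorem mem_tSub {P : Submodule C M} {n : N} : n ∈ tSub ρ g hρ hg P ↔ g.symm n ∈ P := Iff.rfl

theorem tSub_bot : tSub ρ g hρ hg ⊥ = ⊥ := by
  ext n
  simp only [mem_tSub, Submodule.mem_bot]
  constructor
  · intro h
    have := congrArg g h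
    rw [g.apply_symm_apply, map_zero] at this
    exact this
  · intro h
    rw [h, map_zero]

theorem tSub_top : tSub ρ g hρ hg ⊤ = ⊤ := by
  ext n; simp [mem_tSub]

theorem tSub_inf (P P' : Submodule C M) :
    tSub ρ g hρ hg (P ⊓ P') = tSub ρ g hρ hg P ⊓ tSub ρ g hρ hg P' := by
  ext n; simp [mem_tSub, Submodule.mem_inf]

theorem tSub_sup (P P' : Submodule C M) :
    tSub ρ g hρ hg (P ⊔ P') = tSub ρ g hρ hg P ⊔ tSub ρ g hρ hg P' := by
  ext n
  constructor
  · intro hn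
    obtain ⟨p, hp, q, hq, hpq⟩ := Submodule.mem_sup.mp hn
    refine Submodule.mem_sup.mpr ⟨g p, ?_, g q, ?_, ?_⟩
    · show g.symm (g p) ∈ P
      rw [g.symm_apply_apply]; exact hp
    · show g.symm (g q) ∈ P'
      rw [g.symm_apply_apply]; exact hq
    · rw [← map_add, hpq, g.apply_symm_apply]
  · intro hn
    obtain ⟨u, hu, v, hv, huv⟩ := Submodule.mem_sup.mp hn
    show g.symm n ∈ P ⊔ P'
    rw [← huv, map_add]
    exact Submodule.add_mem _ (Submodule.mem_sup_left hu) (Submodule.mem_sup_right hv)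

theorem tSub_ne_bot {P : Submodule C M} (hP : P ≠ ⊥) : tSub ρ g hρ hg P ≠ ⊥ := by
  obtain ⟨x, hx, hx0⟩ := (Submodule.ne_bot_iff P).mp hP
  refine (Submodule.ne_bot_iff _).mpr ⟨g x, ?_, ?_⟩
  · show g.symm (g x) ∈ P
    rw [g.symm_apply_apply]; exact hx
  · intro h
    apply hx0
    have := congrArg g.symm h
    rw [g.symm_apply_apply, map_zero] at this
    exact this

/-- The additive equivalence between a transported submodule and the original. -/
def tSubEquiv (P : Submodule C M) : ↥(tSub ρ g hρ hg P) ≃+ ↥P where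
  toFun n := ⟨g.symm n.1, n.2⟩
  invFun p := ⟨g p.1, by show g.symm (g p.1) ∈ P; rw [g.symm_apply_apply]; exact p.2⟩
  left_inv n := Subtype.ext (g.apply_symm_apply n.1)
  right_inv p := Subtype.ext (g.symm_apply_apply p.1)
  map_add' a b := Subtype.ext (map_add g.symm _ _)

theorem tSubEquiv_smul (P : Submodule C M) (a : C) (n : ↥(tSub ρ g hρ hg P)) :
    tSubEquiv ρ g hρ hg P (ρ a • n) = a • tSubEquiv ρ g hρ hg P n :=
  Subtype.ext (tg_symm ρ g hg a n.1)

theorem tSubEquiv_symm_smul (P : Submodule C M) (a : C) (p : ↥P) :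
    (tSubEquiv ρ g hρ hg P).symm (a • p) = ρ a • (tSubEquiv ρ g hρ hg P).symm p :=
  Subtype.ext (hg a p.1)

/-- Transport a linear equivalence between submodules. -/
noncomputable def tEquiv {P Q : Submodule C M} (e : ↥P ≃ₗ[C] ↥Q) :
    ↥(tSub ρ g hρ hg P) ≃ₗ[D] ↥(tSub ρ g hρ hg Q) := by
  refine AddEquiv.toLinearEquiv
    (((tSubEquiv ρ g hρ hg P).trans e.toAddEquiv).trans (tSubEquiv ρ g hρ hg Q).symm) ?_
  intro dd n
  obtain ⟨a, rfl⟩ := hρ dd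
  show (tSubEquiv ρ g hρ hg Q).symm (e (tSubEquiv ρ g hρ hg P (ρ a • n)))
      = ρ a • (tSubEquiv ρ g hρ hg Q).symm (e (tSubEquiv ρ g hρ hg P n))
  rw [tSubEquiv_smul, map_smul, tSubEquiv_symm_smul]

include hρ hg in
theorem tSquareFree (hN : IsSquareFreeModule D N) : IsSquareFreeModule C M := by
  intro A B hA hB hAB
  constructor
  intro e
  exact (hN (tSub ρ g hρ hg A) (tSub ρ g hρ hg B) (tSub_ne_bot ρ g hρ hg hA)
    (tSub_ne_bot ρ g hρ hg hB)
    (by rw [← tSub_inf, hAB, tSub_bot])).false (tEquiv ρ g hρ hg e)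

include hρ hg in
theorem tSummandSquareFree (hN : IsSummandSquareFree D N) : IsSummandSquareFree C M := by
  intro A B hAs hBs hA hB hAB
  constructor
  intro e
  have hs : ∀ {P : Submodule C M}, IsDirectSummand P → IsDirectSummand (tSub ρ g hρ hg P) := by
    rintro P ⟨P', hP'⟩
    refine ⟨tSub ρ g hρ hg P', ?_, ?_⟩
    · rw [disjoint_iff, ← tSub_inf, disjoint_iff.mp hP'.disjoint, tSub_bot]
    · rw [codisjoint_iff, ← tSub_sup, codisjoint_iff.mp hP'.codisjoint, tSub_top]
  exact (hN _ _ (hs hAs) (hs hBs) (tSub_ne_bot ρ g hρ hg hA) (tSub_ne_bot ρ g hρ hg hB)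
    (by rw [← tSub_inf, hAB, tSub_bot])).false (tEquiv ρ g hρ hg e)

/-- Pull back a submodule along the compatible pair. -/
def tSubInv (Q : Submodule D N) : Submodule C M where
  carrier := {m | g m ∈ Q}
  add_mem' := by
    intro a b ha hb
    simp only [Set.mem_setOf_eq, map_add] at *
    exact Q.add_mem ha hb
  zero_mem' := by
    simp only [Set.mem_setOf_eq, map_zero]
    exact Q.zero_mem
  smul_mem' := by
    intro a x hx
    simp only [Set.mem_setOf_eq] at *
    rw [hg]
    exact Q.smul_mem (ρ a) hx

include hρ hg in
theorem tSemisimple (hN : IsSemisimpleModule D N) : IsSemisimpleModule C M := by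
  haveI := hN
  refine (isSemisimpleModule_iff C M).mpr ⟨fun P => ?_⟩
  obtain ⟨Q', hQ'⟩ := exists_isCompl (tSub ρ g hρ hg P)
  refine ⟨tSubInv ρ g hg Q', ?_, ?_⟩
  · rw [disjoint_iff, eq_bot_iff]
    intro x hx
    obtain ⟨hx1, hx2⟩ := Submodule.mem_inf.mp hx
    have hgx : g x ∈ tSub ρ g hρ hg P ⊓ Q' := by
      refine Submodule.mem_inf.mpr ⟨?_, hx2⟩
      show g.symm (g x) ∈ P
      rw [g.symm_apply_apply]; exact hx1
    rw [disjoint_iff.mp hQ'.disjoint] at hgx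
    have hgx0 : g x = 0 := by simpa using hgx
    have : x = 0 := by
      have := congrArg g.symm hgx0
      rw [g.symm_apply_apply, map_zero] at this
      exact this
    simp [this]
  · rw [codisjoint_iff, eq_top_iff]
    intro x _
    have hgx : g x ∈ tSub ρ g hρ hg P ⊔ Q' := by
      rw [codisjoint_iff.mp hQ'.codisjoint]; trivial
    obtain ⟨u, hu, v, hv, huv⟩ := Submodule.mem_sup.mp hgx
    refine Submodule.mem_sup.mpr ⟨g.symm u, hu, g.symm v, ?_, ?_⟩
    · show g (g.symm v) ∈ Q'
      rw [g.apply_symm_apply]; exact hv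
    · rw [← map_add, huv, g.symm_apply_apply]

end Transport

end C4Aux
namespace C4Aux

section Region

variable {R : Type*} [Ring R] {M : Type*} [AddCommGroup M] [Module R M]

theorem squareFree_region {U : Submodule R M} (hU : IsSquareFreeModule R ↥U) :
    ∀ P Q : Submodule R M, P ≤ U → Q ≤ U → P ≠ ⊥ → Q ≠ ⊥ → P ⊓ Q = ⊥ →
      IsEmpty (↥P ≃ₗ[R] ↥Q) := by
  intro P Q hPU hQU hP hQ hPQ
  constructor
  intro e
  set P' := Submodule.comap U.subtype P with hP'_def
  set Q' := Submodule.comap U.subtype Q with hQ'_def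
  have eP : ↥P' ≃ₗ[R] ↥P := Submodule.comapSubtypeEquivOfLe hPU
  have eQ : ↥Q' ≃ₗ[R] ↥Q := Submodule.comapSubtypeEquivOfLe hQU
  refine (hU P' Q' ?_ ?_ ?_).false (eP.trans (e.trans eQ.symm))
  · obtain ⟨x, hx, hx0⟩ := (Submodule.ne_bot_iff P).mp hP
    refine (Submodule.ne_bot_iff P').mpr ⟨⟨x, hPU hx⟩, hx, ?_⟩
    intro h
    exact hx0 (congrArg Subtype.val h)
  · obtain ⟨x, hx, hx0⟩ := (Submodule.ne_bot_iff Q).mp hQ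
    refine (Submodule.ne_bot_iff Q').mpr ⟨⟨x, hQU hx⟩, hx, ?_⟩
    intro h
    exact hx0 (congrArg Subtype.val h)
  · rw [eq_bot_iff]
    intro z hz
    obtain ⟨hz1, hz2⟩ := Submodule.mem_inf.mp hz
    have hm : (z : M) ∈ P ⊓ Q := Submodule.mem_inf.mpr ⟨hz1, hz2⟩
    rw [hPQ] at hm
    have : (z : M) = 0 := by simpa using hm
    have : z = 0 := Subtype.ext this
    simp [this]

end Region

section CornerSS

variable {S : Type*} [Ring S]

/-- The corner of a semisimple ring at an idempotent is a semisimple ring. -/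
theorem corner_isSemisimpleRing (hS : IsSemisimpleRing S)
    (e : S) (he : IsIdempotentElem e) : IsSemisimpleRing (Corner e he) := by
  haveI := hS
  -- the left ideal `Se`
  set Lmod : Submodule S S :=
    { carrier := {x : S | x * e = x}
      add_mem' := by
        intro a b ha hb
        simp only [Set.mem_setOf_eq] at *
        rw [add_mul, ha, hb]
      zero_mem' := zero_mul e
      smul_mem' := by
        intro s x hx
        simp only [Set.mem_setOf_eq, smul_eq_mul] at *
        rw [mul_assoc, hx] } with hLmod_def
  have hmemL : ∀ x : S, x ∈ Lmod ↔ x * e = x := fun _ => Iff.rfl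
  -- the transfer of a left ideal of `S` contained in `Lmod` to a left ideal of the corner
  have hcornermem : ∀ z : S, e * z * e ∈ cornerSubring e := by
    intro z
    constructor
    · rw [← mul_assoc, ← mul_assoc, he]
    · rw [mul_assoc, he]
  set Φ : Submodule S S → Submodule (Corner e he) (Corner e he) := fun W =>
    { carrier := {y : Corner e he | (y.1 : S) ∈ W}
      add_mem' := by
        intro a b ha hb
        simp only [Set.mem_setOf_eq] at *
        exact W.add_mem ha hb
      zero_mem' := W.zero_mem
      smul_mem' := by
        intro r y hy
        simp only [Set.mem_setOf_eq] at *
        exact W.smul_mem r.1 hy } with hΦ_def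
  have hmemΦ : ∀ (W : Submodule S S) (y : Corner e he), y ∈ Φ W ↔ (y.1 : S) ∈ W :=
    fun _ _ => Iff.rfl
  -- each transported simple piece is ⊥ or an atom
  have hatom : ∀ W : Submodule S S, W ≤ Lmod → IsAtom W → (Φ W = ⊥ ∨ IsAtom (Φ W)) := by
    intro W hWL hW
    by_cases hbot : Φ W = ⊥
    · exact Or.inl hbot
    right
    constructor
    · exact hbot
    intro Bs hlt
    by_contra hBs
    obtain ⟨y, hy, hy0⟩ := (Submodule.ne_bot_iff Bs).mp hBs
    have hyW : (y.1 : S) ∈ W := (hmemΦ W y).mp (hlt.le hy)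
    have hy10 : (y.1 : S) ≠ 0 := by
      intro h
      exact hy0 (Subtype.ext h)
    -- span of y.1 is all of W
    have hspan : Submodule.span S {(y.1 : S)} = W := by
      have hle : Submodule.span S {(y.1 : S)} ≤ W := by
        rw [Submodule.span_le, Set.singleton_subset_iff]
        exact hyW
      rcases eq_or_ne (Submodule.span S {(y.1 : S)}) W with h | h
      · exact h
      · have := hW.2 _ (lt_of_le_of_ne hle h)
        rw [Submodule.span_singleton_eq_bot] at this
        exact absurd this hy10
    -- hence Φ W ≤ Bs, contradiction
    have hΦle : Φ W ≤ Bs := by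
      intro z hz
      have hzW : (z.1 : S) ∈ W := (hmemΦ W z).mp hz
      rw [← hspan] at hzW
      obtain ⟨s, hs⟩ := Submodule.mem_span_singleton.mp hzW
      obtain ⟨r, hr⟩ : ∃ r : Corner e he, r.1 = e * s * e := ⟨⟨_, hcornermem s⟩, rfl⟩
      have hze : r • y = z := by
        apply Subtype.ext
        change r.1 * y.1 = z.1
        rw [hr]
        have h1 : e * y.1 = y.1 := y.2.1
        have h2 : e * z.1 = z.1 := z.2.1
        calc (e * s * e) * y.1 = e * s * (e * y.1) := by rw [mul_assoc, mul_assoc]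
          _ = e * (s * y.1) := by rw [h1, mul_assoc]
          _ = e * z.1 := by rw [show s * y.1 = z.1 from hs]
          _ = z.1 := h2
      rw [← hze]
      exact Bs.smul_mem r hy
    exact (lt_irrefl _ (lt_of_lt_of_le hlt hΦle)).elim
  -- covering
  have hcover : sSup {a : Submodule (Corner e he) (Corner e he) | IsAtom a} = ⊤ := by
    rw [eq_top_iff]
    intro x _
    -- x.1.1 ∈ Lmod
    have hxL : (x.1 : S) ∈ Lmod := x.2.2
    -- decompose Lmod into simples
    have hLsimp : Lmod = ⨆ V : ↥{m : Submodule S ↥Lmod | IsSimpleModule S ↥m},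
        Submodule.map Lmod.subtype V.1 := by
      have h1 : sSup {m : Submodule S ↥Lmod | IsSimpleModule S ↥m} = ⊤ :=
        IsSemisimpleModule.sSup_simples_eq_top S ↥Lmod
      have h3 : Submodule.map Lmod.subtype (sSup {m : Submodule S ↥Lmod | IsSimpleModule S ↥m})
          = Lmod := by
        rw [h1]
        exact Submodule.map_subtype_top Lmod
      rw [sSup_eq_iSup', Submodule.map_iSup] at h3
      exact h3.symm
    rw [hLsimp] at hxL
    -- induction over the supremum
    have hind : ∀ z : S,
        z ∈ (⨆ V : ↥{m : Submodule S ↥Lmod | IsSimpleModule S ↥m},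
          Submodule.map Lmod.subtype V.1) →
        ∀ (hc : e * z * e ∈ cornerSubring e), (⟨e * z * e, hc⟩ : Corner e he) ∈
          sSup {a : Submodule (Corner e he) (Corner e he) | IsAtom a} := by
      intro z hz
      refine Submodule.iSup_induction
        (motive := fun u => ∀ (hc : e * u * e ∈ cornerSubring e), (⟨e * u * e, hc⟩ : Corner e he) ∈
          sSup {a : Submodule (Corner e he) (Corner e he) | IsAtom a}) _ hz ?_ ?_ ?_
      · intro V w hw hc
        -- w ∈ map subtype V.1, so w ∈ Lmod and the corner element lies in Φ (map subtype V.1)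
        have hwL : w ∈ Lmod := by
          obtain ⟨w', _, rfl⟩ := hw
          exact w'.2
        have hwe : w * e = w := hwL
        have hewe : e * w * e = e * w := by rw [mul_assoc, hwe]
        have hmem : (⟨e * w * e, hc⟩ : Corner e he) ∈
            Φ (Submodule.map Lmod.subtype V.1) := by
          show ((e * w * e : S)) ∈ Submodule.map Lmod.subtype V.1
          rw [hewe]
          have : e * w = e • w := rfl
          rw [this]
          exact Submodule.smul_mem _ _ hw
        have hsub : Submodule.map Lmod.subtype V.1 ≤ Lmod := by
          intro u hu
          obtain ⟨u', _, rfl⟩ := hu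
          exact u'.2
        have hsimple : IsAtom (Submodule.map Lmod.subtype V.1) := by
          haveI : IsSimpleModule S ↥V.1 := V.2
          haveI : IsSimpleModule S ↥(Submodule.map Lmod.subtype V.1) :=
            IsSimpleModule.congr
              (Submodule.equivMapOfInjective Lmod.subtype Lmod.injective_subtype V.1).symm
          exact (isSimpleModule_iff_isAtom (m := Submodule.map Lmod.subtype V.1)).mp this
        rcases hatom _ hsub hsimple with hb | ha
        · rw [hb] at hmem
          have h0 : (⟨e * w * e, hc⟩ : Corner e he) = 0 := (Submodule.mem_bot (M := Corner e he) _).mp hmem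
          rw [h0]
          exact Submodule.zero_mem _
        · exact Submodule.mem_sSup_of_mem (M := Corner e he) ha (by exact hmem)
      · intro hc
        have h0 : (⟨e * 0 * e, hc⟩ : Corner e he) = 0 := by
          apply Subtype.ext
          show e * 0 * e = 0
          rw [mul_zero, zero_mul]
        rw [h0]
        exact Submodule.zero_mem _
      · intro u v hu hv hc
        have hadd : (⟨e * (u + v) * e, hc⟩ : Corner e he)
            = ⟨e * u * e, hcornermem u⟩ + ⟨e * v * e, hcornermem v⟩ := by
          apply Subtype.ext
          show e * (u + v) * e = e * u * e + e * v * e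
          rw [mul_add, add_mul]
        rw [hadd]
        exact Submodule.add_mem _ (hu _) (hv _)
    have := hind (x.1 : S) hxL (hcornermem _)
    have hx_eq : (⟨e * (x.1 : S) * e, hcornermem (x.1 : S)⟩ : Corner e he) = x := by
      apply Subtype.ext
      show e * (x.1 : S) * e = (x.1 : S)
      have h1 : e * (x.1 : S) = (x.1 : S) := x.2.1
      have h2 : (x.1 : S) * e = (x.1 : S) := x.2.2
      rw [h1, h2]
    rw [hx_eq] at this
    exact this
  exact (isSemisimpleModule_iff _ _).mpr (complementedLattice_of_sSup_atoms_eq_top hcover)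

end CornerSS

end C4Aux
/-- Let `R` be a strongly right `C4*`-ring with a right-to-left symmetry datum
`R ≅ S × T`, and let `e = (e₁, e₂)` (i.e. `e = iso.symm ε` with `ε = (ε.1, ε.2) : S × T`) be
an idempotent of `R` with `ReR = R`. If the residual corner `ε.2 T ε.2` has
summand-square-free right regular module and satisfies `HST` and `CSA`, then the full corner
`eRe` is a strongly left `C4*`-ring. -/
theorem full_corner_transfer {R S T : Type*} [Ring R] [Ring S] [Ring T]
    (h : IsStronglyRightC4StarRing R)
    (d : RightToLeftSymmetryDatum R S T)
    (ε : S × T) (hε : IsIdempotentElem ε)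
    (he : IsIdempotentElem (d.iso.symm ε))
    (hfull : ∀ r : R, ∃ (n : ℕ) (a b : Fin n → R),
      r = ∑ i, a i * (d.iso.symm ε) * b i)
    (h2 : IsIdempotentElem ε.2)
    (hssf : IsSummandSquareFree (Corner ε.2 h2)ᵐᵒᵖ (Corner ε.2 h2))
    (hhst : HST (Corner ε.2 h2)) (hcsa : CSAxiom (Corner ε.2 h2)) :
    IsStronglyLeftC4StarRing (Corner (d.iso.symm ε) he) := by
  classical
  -- Notation
  set CR := Corner (d.iso.symm ε) he with hCR_def
  -- basic facts
  have hε1 : IsIdempotentElem ε.1 := by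
    have := congrArg Prod.fst hε
    simpa [IsIdempotentElem] using this
  have hie : d.iso (d.iso.symm ε) = ε := d.iso.apply_symm_apply ε
  have hmemC : ∀ x : R, x ∈ cornerSubring (d.iso.symm ε) ↔
      (ε * d.iso x = d.iso x ∧ d.iso x * ε = d.iso x) := by
    intro x
    rw [mem_cornerSubring]
    constructor
    · rintro ⟨ha, hb⟩
      constructor
      · rw [← hie, ← map_mul, ha]
      · rw [← hie, ← map_mul, hb]
    · rintro ⟨ha, hb⟩
      constructor
      · apply d.iso.injective
        rw [map_mul, hie, ha]
      · apply d.iso.injective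
        rw [map_mul, hie, hb]
  have hcomps : ∀ x : CR, ε.1 * (d.iso x.1).1 = (d.iso x.1).1 ∧
      (d.iso x.1).1 * ε.1 = (d.iso x.1).1 ∧
      ε.2 * (d.iso x.1).2 = (d.iso x.1).2 ∧
      (d.iso x.1).2 * ε.2 = (d.iso x.1).2 := by
    intro x
    obtain ⟨ha, hb⟩ := (hmemC x.1).mp x.2
    exact ⟨congrArg Prod.fst ha, congrArg Prod.fst hb,
      congrArg Prod.snd ha, congrArg Prod.snd hb⟩
  -- the central idempotent
  obtain ⟨c, hcval⟩ : ∃ c : CR, c.1 = d.iso.symm (ε.1, 0) := by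
    refine ⟨⟨d.iso.symm (ε.1, 0), (hmemC _).mpr ?_⟩, rfl⟩
    rw [d.iso.apply_symm_apply]
    constructor
    · show ε * ((ε.1, 0) : S × T) = (ε.1, 0)
      have hl : ε * ((ε.1, 0) : S × T) = (ε.1 * ε.1, ε.2 * 0) := rfl
      rw [hl, hε1, mul_zero]
    · show ((ε.1, 0) : S × T) * ε = (ε.1, 0)
      have hl : ((ε.1, 0) : S × T) * ε = (ε.1 * ε.1, 0 * ε.2) := rfl
      rw [hl, hε1, zero_mul]
  have hciso : d.iso c.1 = (ε.1, 0) := by rw [hcval, d.iso.apply_symm_apply]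
  have hcen : ∀ x : CR, c * x = x * c := by
    intro x
    apply Subtype.ext
    apply d.iso.injective
    show d.iso ((c * x).1) = d.iso ((x * c).1)
    have hcx : (c * x).1 = c.1 * x.1 := rfl
    have hxc : (x * c).1 = x.1 * c.1 := rfl
    obtain ⟨hc1, hc2, _, _⟩ := hcomps x
    rw [hcx, hxc, map_mul, map_mul, hciso]
    have hl : ((ε.1, 0) : S × T) * d.iso x.1
        = (ε.1 * (d.iso x.1).1, 0 * (d.iso x.1).2) := rfl
    have hr : d.iso x.1 * ((ε.1, 0) : S × T)
        = ((d.iso x.1).1 * ε.1, (d.iso x.1).2 * 0) := rfl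
    rw [hl, hr, hc1, hc2, zero_mul, mul_zero]
  have hcC : IsIdempotentElem c := by
    apply Subtype.ext
    apply d.iso.injective
    show d.iso ((c * c).1) = d.iso c.1
    have hcc : (c * c).1 = c.1 * c.1 := rfl
    rw [hcc, map_mul, hciso]
    have hl : ((ε.1, 0) : S × T) * ((ε.1, 0) : S × T) = (ε.1 * ε.1, 0 * 0) := rfl
    rw [hl, hε1, zero_mul]
  -- membership characterizations
  have hkill : ∀ x : CR, x ∈ C4Aux.cKill c hcen CR ↔ (d.iso x.1).1 = 0 := by
    intro x
    constructor
    · intro hx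
      have hx' : c * x = 0 := hx
      have hv : c.1 * x.1 = (0 : R) := congrArg Subtype.val hx'
      have hiso := congrArg d.iso hv
      rw [map_mul, hciso, map_zero] at hiso
      have hfst := congrArg Prod.fst hiso
      have hl : (((ε.1, 0) : S × T) * d.iso x.1).1 = ε.1 * (d.iso x.1).1 := rfl
      rw [hl, (hcomps x).1] at hfst
      exact hfst
    · intro hs
      show c • x = 0
      have : c * x = 0 := by
        apply Subtype.ext
        apply d.iso.injective
        show d.iso ((c * x).1) = d.iso ((0 : CR).1)
        have hcx : (c * x).1 = c.1 * x.1 := rfl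
        have h0 : ((0 : CR).1) = (0 : R) := rfl
        rw [hcx, h0, map_mul, map_zero, hciso]
        have hl : ((ε.1, 0) : S × T) * d.iso x.1
            = (ε.1 * (d.iso x.1).1, 0 * (d.iso x.1).2) := rfl
        rw [hl, hs, mul_zero, zero_mul]
        rfl
      exact this
  have hfix : ∀ x : CR, x ∈ C4Aux.cFix c hcen CR ↔ (d.iso x.1).2 = 0 := by
    intro x
    constructor
    · intro hx
      have hx' : c * x = x := hx
      have hv : c.1 * x.1 = x.1 := congrArg Subtype.val hx'
      have hiso := congrArg d.iso hv
      rw [map_mul, hciso] at hiso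
      have hsnd := congrArg Prod.snd hiso
      have hl : (((ε.1, 0) : S × T) * d.iso x.1).2 = 0 * (d.iso x.1).2 := rfl
      rw [hl, zero_mul] at hsnd
      exact hsnd.symm
    · intro hs
      show c • x = x
      have : c * x = x := by
        apply Subtype.ext
        apply d.iso.injective
        show d.iso ((c * x).1) = d.iso x.1
        have hcx : (c * x).1 = c.1 * x.1 := rfl
        rw [hcx, map_mul, hciso]
        have hl : ((ε.1, 0) : S × T) * d.iso x.1
            = (ε.1 * (d.iso x.1).1, 0 * (d.iso x.1).2) := rfl
        rw [hl, (hcomps x).1, zero_mul, ← hs]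
      exact this
  -- Square-freeness of T₂ = Corner ε.2 h2, via HST at the identity idempotent
  have h1T : IsIdempotentElem (1 : Corner ε.2 h2) := IsIdempotentElem.one
  let uT : Corner (1 : Corner ε.2 h2) h1T →+* Corner ε.2 h2 :=
    { toFun := fun x => x.1
      map_one' := rfl
      map_mul' := fun _ _ => rfl
      map_zero' := rfl
      map_add' := fun _ _ => rfl }
  let ρ1op : (Corner (1 : Corner ε.2 h2) h1T)ᵐᵒᵖ →+* (Corner ε.2 h2)ᵐᵒᵖ := RingHom.op uT
  have hρ1op : Function.Surjective ρ1op := by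
    intro y
    refine ⟨MulOpposite.op ⟨MulOpposite.unop y, one_mul _, mul_one _⟩, ?_⟩
    exact MulOpposite.op_unop y
  let gT : ↥(rightPart (1 : Corner ε.2 h2)) ≃+ Corner ε.2 h2 :=
    { toFun := fun x => x.1
      invFun := fun t => ⟨t, mul_one t⟩
      left_inv := fun x => Subtype.ext rfl
      right_inv := fun t => rfl
      map_add' := fun _ _ => rfl }
  have hgT : ∀ (a : (Corner (1 : Corner ε.2 h2) h1T)ᵐᵒᵖ)
      (x : ↥(rightPart (1 : Corner ε.2 h2))), gT (a • x) = ρ1op a • gT x :=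
    fun _ _ => rfl
  have hssf' : IsSummandSquareFree (Corner (1 : Corner ε.2 h2) h1T)ᵐᵒᵖ
      ↥(rightPart (1 : Corner ε.2 h2)) :=
    C4Aux.tSummandSquareFree ρ1op gT hρ1op hgT hssf
  let uT' : Corner ε.2 h2 →+* Corner (1 : Corner ε.2 h2) h1T :=
    { toFun := fun t => ⟨t, one_mul t, mul_one t⟩
      map_one' := Subtype.ext rfl
      map_mul' := fun _ _ => Subtype.ext rfl
      map_zero' := Subtype.ext rfl
      map_add' := fun _ _ => Subtype.ext rfl }
  have huT' : Function.Surjective uT' := fun y => ⟨y.1, Subtype.ext rfl⟩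
  let gT' : Corner ε.2 h2 ≃+ ↥(leftPart (1 : Corner ε.2 h2)) :=
    { toFun := fun t => ⟨t, one_mul t⟩
      invFun := fun y => y.1
      left_inv := fun t => rfl
      right_inv := fun y => Subtype.ext rfl
      map_add' := fun _ _ => Subtype.ext rfl }
  have hgT' : ∀ (a : Corner ε.2 h2) (x : Corner ε.2 h2),
      gT' (a • x) = uT' a • gT' x := fun _ _ => Subtype.ext rfl
  have hsqfT₂ : IsSquareFreeModule (Corner ε.2 h2) (Corner ε.2 h2) :=
    C4Aux.tSquareFree uT' gT' huT' hgT' (hhst 1 h1T hssf')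
  -- transport square-freeness to the c-killed part of CR
  let π₂ : CR →+* Corner ε.2 h2 :=
    { toFun := fun x => ⟨(d.iso x.1).2, (hcomps x).2.2.1, (hcomps x).2.2.2⟩
      map_one' := Subtype.ext (by
        show (d.iso (d.iso.symm ε)).2 = ε.2
        rw [hie])
      map_mul' := fun x y => Subtype.ext (by
        show (d.iso ((x * y).1)).2 = (d.iso x.1).2 * (d.iso y.1).2
        have hxy : (x * y).1 = x.1 * y.1 := rfl
        rw [hxy, map_mul]
        rfl)
      map_zero' := Subtype.ext (by
        show (d.iso ((0 : CR).1)).2 = 0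
        have h0 : ((0 : CR).1) = (0 : R) := rfl
        rw [h0, map_zero]
        rfl)
      map_add' := fun x y => Subtype.ext (by
        show (d.iso ((x + y).1)).2 = (d.iso x.1).2 + (d.iso y.1).2
        have hxy : (x + y).1 = x.1 + y.1 := rfl
        rw [hxy, map_add]
        rfl) }
  have hπ₂ : Function.Surjective π₂ := by
    intro t
    have hmem : d.iso.symm ((0 : S), t.1) ∈ cornerSubring (d.iso.symm ε) := by
      apply (hmemC _).mpr
      rw [d.iso.apply_symm_apply]
      constructor
      · show ε * (((0 : S), t.1) : S × T) = ((0 : S), t.1)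
        have hl : ε * (((0 : S), t.1) : S × T) = (ε.1 * 0, ε.2 * t.1) := rfl
        rw [hl, mul_zero, t.2.1]
      · show (((0 : S), t.1) : S × T) * ε = ((0 : S), t.1)
        have hl : (((0 : S), t.1) : S × T) * ε = (0 * ε.1, t.1 * ε.2) := rfl
        rw [hl, zero_mul, t.2.2]
    refine ⟨⟨d.iso.symm ((0 : S), t.1), hmem⟩, ?_⟩
    apply Subtype.ext
    show (d.iso (d.iso.symm ((0 : S), t.1))).2 = t.1
    rw [d.iso.apply_symm_apply]
  let γ : ↥(C4Aux.cKill c hcen CR) ≃+ Corner ε.2 h2 :=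
    { toFun := fun x => ⟨(d.iso x.1.1).2, (hcomps x.1).2.2.1, (hcomps x.1).2.2.2⟩
      invFun := fun t => ⟨⟨d.iso.symm ((0 : S), t.1), by
          apply (hmemC _).mpr
          rw [d.iso.apply_symm_apply]
          constructor
          · show ε * (((0 : S), t.1) : S × T) = ((0 : S), t.1)
            have hl : ε * (((0 : S), t.1) : S × T) = (ε.1 * 0, ε.2 * t.1) := rfl
            rw [hl, mul_zero, t.2.1]
          · show (((0 : S), t.1) : S × T) * ε = ((0 : S), t.1)
            have hl : (((0 : S), t.1) : S × T) * ε = (0 * ε.1, t.1 * ε.2) := rfl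
            rw [hl, zero_mul, t.2.2]⟩, by
        apply (hkill _).mpr
        show (d.iso ((⟨d.iso.symm ((0 : S), t.1), _⟩ : CR)).1).1 = 0
        rw [d.iso.apply_symm_apply]⟩
      left_inv := fun x => Subtype.ext (Subtype.ext (by
        have hfst : (d.iso (x.1.1)).1 = 0 := (hkill x.1).mp x.2
        show d.iso.symm ((0 : S), (d.iso x.1.1).2) = x.1.1
        rw [← hfst]
        exact d.iso.symm_apply_apply x.1.1))
      right_inv := fun t => Subtype.ext (by
        show (d.iso (d.iso.symm ((0 : S), t.1))).2 = t.1
        rw [d.iso.apply_symm_apply])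
      map_add' := fun a b => Subtype.ext (by
        show (d.iso ((a + b).1.1)).2 = (d.iso a.1.1).2 + (d.iso b.1.1).2
        have hab : ((a + b : ↥(C4Aux.cKill c hcen CR)).1).1 = a.1.1 + b.1.1 := rfl
        rw [hab, map_add]
        rfl) }
  have hγ : ∀ (a : CR) (x : ↥(C4Aux.cKill c hcen CR)), γ (a • x) = π₂ a • γ x := by
    intro a x
    apply Subtype.ext
    show (d.iso ((a • x : ↥(C4Aux.cKill c hcen CR)).1.1)).2
        = (d.iso a.1).2 * (d.iso x.1.1).2
    have hax : ((a • x : ↥(C4Aux.cKill c hcen CR)).1).1 = a.1 * x.1.1 := rfl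
    rw [hax, map_mul]
    rfl
  have hsqKill : IsSquareFreeModule CR ↥(C4Aux.cKill c hcen CR) :=
    C4Aux.tSquareFree π₂ γ hπ₂ hγ hsqfT₂
  have hsf : ∀ P Q : Submodule CR CR, P ≤ C4Aux.cKill c hcen CR →
      Q ≤ C4Aux.cKill c hcen CR → P ≠ ⊥ → Q ≠ ⊥ → P ⊓ Q = ⊥ →
      IsEmpty (↥P ≃ₗ[CR] ↥Q) := C4Aux.squareFree_region hsqKill
  -- semisimplicity of the c-fixed part of CR
  let ρ₁ : CR →+* Corner ε.1 hε1 :=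
    { toFun := fun x => ⟨(d.iso x.1).1, (hcomps x).1, (hcomps x).2.1⟩
      map_one' := Subtype.ext (by
        show (d.iso (d.iso.symm ε)).1 = ε.1
        rw [hie])
      map_mul' := fun x y => Subtype.ext (by
        show (d.iso ((x * y).1)).1 = (d.iso x.1).1 * (d.iso y.1).1
        have hxy : (x * y).1 = x.1 * y.1 := rfl
        rw [hxy, map_mul]
        rfl)
      map_zero' := Subtype.ext (by
        show (d.iso ((0 : CR).1)).1 = 0
        have h0 : ((0 : CR).1) = (0 : R) := rfl
        rw [h0, map_zero]
        rfl)
      map_add' := fun x y => Subtype.ext (by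
        show (d.iso ((x + y).1)).1 = (d.iso x.1).1 + (d.iso y.1).1
        have hxy : (x + y).1 = x.1 + y.1 := rfl
        rw [hxy, map_add]
        rfl) }
  have hρ₁ : Function.Surjective ρ₁ := by
    intro s
    have hmem : d.iso.symm (s.1, (0 : T)) ∈ cornerSubring (d.iso.symm ε) := by
      apply (hmemC _).mpr
      rw [d.iso.apply_symm_apply]
      constructor
      · show ε * ((s.1, (0 : T)) : S × T) = (s.1, (0 : T))
        have hl : ε * ((s.1, (0 : T)) : S × T) = (ε.1 * s.1, ε.2 * 0) := rfl
        rw [hl, mul_zero, s.2.1]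
      · show ((s.1, (0 : T)) : S × T) * ε = (s.1, (0 : T))
        have hl : ((s.1, (0 : T)) : S × T) * ε = (s.1 * ε.1, 0 * ε.2) := rfl
        rw [hl, zero_mul, s.2.2]
    refine ⟨⟨d.iso.symm (s.1, (0 : T)), hmem⟩, ?_⟩
    apply Subtype.ext
    show (d.iso (d.iso.symm (s.1, (0 : T)))).1 = s.1
    rw [d.iso.apply_symm_apply]
  let g₁ : ↥(C4Aux.cFix c hcen CR) ≃+ Corner ε.1 hε1 :=
    { toFun := fun x => ⟨(d.iso x.1.1).1, (hcomps x.1).1, (hcomps x.1).2.1⟩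
      invFun := fun s => ⟨⟨d.iso.symm (s.1, (0 : T)), by
          apply (hmemC _).mpr
          rw [d.iso.apply_symm_apply]
          constructor
          · show ε * ((s.1, (0 : T)) : S × T) = (s.1, (0 : T))
            have hl : ε * ((s.1, (0 : T)) : S × T) = (ε.1 * s.1, ε.2 * 0) := rfl
            rw [hl, mul_zero, s.2.1]
          · show ((s.1, (0 : T)) : S × T) * ε = (s.1, (0 : T))
            have hl : ((s.1, (0 : T)) : S × T) * ε = (s.1 * ε.1, 0 * ε.2) := rfl
            rw [hl, zero_mul, s.2.2]⟩, by
        apply (hfix _).mpr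
        show (d.iso ((⟨d.iso.symm (s.1, (0 : T)), _⟩ : CR)).1).2 = 0
        rw [d.iso.apply_symm_apply]⟩
      left_inv := fun x => Subtype.ext (Subtype.ext (by
        have hsnd : (d.iso (x.1.1)).2 = 0 := (hfix x.1).mp x.2
        show d.iso.symm ((d.iso x.1.1).1, (0 : T)) = x.1.1
        rw [← hsnd]
        exact d.iso.symm_apply_apply x.1.1))
      right_inv := fun s => Subtype.ext (by
        show (d.iso (d.iso.symm (s.1, (0 : T)))).1 = s.1
        rw [d.iso.apply_symm_apply])
      map_add' := fun a b => Subtype.ext (by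
        show (d.iso ((a + b).1.1)).1 = (d.iso a.1.1).1 + (d.iso b.1.1).1
        have hab : ((a + b : ↥(C4Aux.cFix c hcen CR)).1).1 = a.1.1 + b.1.1 := rfl
        rw [hab, map_add]
        rfl) }
  have hg₁ : ∀ (a : CR) (x : ↥(C4Aux.cFix c hcen CR)), g₁ (a • x) = ρ₁ a • g₁ x := by
    intro a x
    apply Subtype.ext
    show (d.iso ((a • x : ↥(C4Aux.cFix c hcen CR)).1.1)).1
        = (d.iso a.1).1 * (d.iso x.1.1).1
    have hax : ((a • x : ↥(C4Aux.cFix c hcen CR)).1).1 = a.1 * x.1.1 := rfl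
    rw [hax, map_mul]
    rfl
  have hssS₁ : IsSemisimpleRing (Corner ε.1 hε1) :=
    C4Aux.corner_isSemisimpleRing d.semisimpleArtinian ε.1 hε1
  have hssFix : IsSemisimpleModule CR ↥(C4Aux.cFix c hcen CR) :=
    C4Aux.tSemisimple ρ₁ g₁ hρ₁ hg₁ hssS₁
  exact ⟨C4Aux.semiWeakCS_of_central_split hcen hcC hssFix hsf,
    C4Aux.c4star_of_central_split hcen hcC hssFix hsf⟩
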